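/- Consider Subgradient Descent with arbitrary step-sizes α_i ≥ 0. Then for all integers k ≥ i ≥ 0 with Σ_{l=i}^{k} α_l > 0, the following inequality holds: f_b^k ≤ f* + (Dist(x^i, Opt)² + Σ_{l=i}^{k} ‖g_l‖² α_l²) / (2 Σ_{l=i}^{k} α_l); in particular, if ‖g_l‖ ≤ M for all l, then f_b^k ≤ f* + (Dist(x^i, Opt)² + M² Σ_{l=i}^{k} α_l²) / (2 Σ_{l=i}^{k} α_l). -/

import Mathlib

open scoped RealInnerProductSpace

/-- `p` is the Euclidean projection of `u` onto `Q`. -/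
def IsProj {n : ℕ} (Q : Set (EuclideanSpace ℝ (Fin n)))
    (u p : EuclideanSpace ℝ (Fin n)) : Prop :=
  p ∈ Q ∧ ∀ w ∈ Q, dist p u ≤ dist w u

/-- Variational inequality for the projection onto a convex set. -/
lemma isProj_inner_le {n : ℕ} {Q : Set (EuclideanSpace ℝ (Fin n))} (hQcv : Convex ℝ Q)
    {u p : EuclideanSpace ℝ (Fin n)} (hp : p ∈ Q) (hmin : ∀ w ∈ Q, dist p u ≤ dist w u) :
    ∀ w ∈ Q, ⟪u - p, w - p⟫ ≤ 0 := by
  have hne : Nonempty Q := ⟨⟨p, hp⟩⟩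
  have hbdd : BddBelow (Set.range fun w : Q => ‖u - w‖) := by
    refine ⟨0, ?_⟩
    rintro _ ⟨w, rfl⟩
    exact norm_nonneg _
  have key : ‖u - p‖ = ⨅ w : Q, ‖u - w‖ := by
    refine le_antisymm (le_ciInf fun w => ?_) (ciInf_le hbdd ⟨p, hp⟩)
    rw [norm_sub_rev, norm_sub_rev u (w : EuclideanSpace ℝ (Fin n))]
    exact hmin w w.2
  exact (norm_eq_iInf_iff_real_inner_le_zero hQcv hp).mp key

/-- convergence bounds for Subgradient Descent with arbitrary step-sizes. -/
theorem subgradient_descent_bound {n : ℕ} (Q : Set (EuclideanSpace ℝ (Fin n)))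
    (hQne : Q.Nonempty) (hQcl : IsClosed Q) (hQcv : Convex ℝ Q)
    (f : EuclideanSpace ℝ (Fin n) → ℝ) (hfc : ConvexOn ℝ Q f)
    (fstar : ℝ) (hattain : ∃ z ∈ Q, f z = fstar) (hmin : ∀ z ∈ Q, fstar ≤ f z)
    (x g : ℕ → EuclideanSpace ℝ (Fin n)) (α : ℕ → ℝ)
    (hx0 : x 0 ∈ Q) (hα : ∀ i, 0 ≤ α i)
    (hsub : ∀ i, ∀ w ∈ Q, f (x i) + ⟪g i, w - x i⟫ ≤ f w)
    (hupd : ∀ i, IsProj Q (x i - α i • g i) (x (i + 1)))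
    (i k : ℕ) (hik : i ≤ k) (hpos : 0 < ∑ l ∈ Finset.Icc i k, α l) :
    ((Finset.range (k + 1)).inf' Finset.nonempty_range_add_one (fun l => f (x l)) ≤
      fstar + (Metric.infDist (x i) {z ∈ Q | f z = fstar} ^ 2
        + ∑ l ∈ Finset.Icc i k, ‖g l‖ ^ 2 * α l ^ 2) / (2 * ∑ l ∈ Finset.Icc i k, α l)) ∧
    (∀ M : ℝ, (∀ l, ‖g l‖ ≤ M) →
      (Finset.range (k + 1)).inf' Finset.nonempty_range_add_one (fun l => f (x l)) ≤
        fstar + (Metric.infDist (x i) {z ∈ Q | f z = fstar} ^ 2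
          + M ^ 2 * ∑ l ∈ Finset.Icc i k, α l ^ 2) / (2 * ∑ l ∈ Finset.Icc i k, α l)) := by
  set fb := (Finset.range (k + 1)).inf' Finset.nonempty_range_add_one (fun l => f (x l)) with hfb
  set A := ∑ l ∈ Finset.Icc i k, α l with hA
  set S := ∑ l ∈ Finset.Icc i k, ‖g l‖ ^ 2 * α l ^ 2 with hS
  set Opt := {z ∈ Q | f z = fstar} with hOpt
  -- all iterates stay in Q
  have hxQ : ∀ l, x l ∈ Q := by
    intro l
    induction l with
    | zero => exact hx0
    | succ m ih => exact (hupd m).1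
  -- per-step inequality
  have step : ∀ l, ∀ z ∈ Q, f z = fstar →
      ‖x (l + 1) - z‖ ^ 2 ≤ ‖x l - z‖ ^ 2 - 2 * α l * (f (x l) - fstar)
        + ‖g l‖ ^ 2 * α l ^ 2 := by
    intro l z hz hfz
    set u := x l - α l • g l with hu
    set p := x (l + 1) with hp
    have vi : ⟪u - p, z - p⟫ ≤ 0 := isProj_inner_le hQcv (hupd l).1 (hupd l).2 z hz
    have expand : ‖u - z‖ ^ 2 = ‖u - p‖ ^ 2 + 2 * ⟪u - p, p - z⟫ + ‖p - z‖ ^ 2 := by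
      have h1 := norm_add_sq_real (u - p) (p - z)
      rw [sub_add_sub_cancel] at h1
      linarith
    have hinner : ⟪u - p, p - z⟫ = - ⟪u - p, z - p⟫ := by
      rw [← inner_neg_right]; congr 1; abel
    have hle1 : ‖p - z‖ ^ 2 ≤ ‖u - z‖ ^ 2 := by
      rw [expand, hinner]
      nlinarith [sq_nonneg ‖u - p‖]
    have expand2 : ‖u - z‖ ^ 2 = ‖x l - z‖ ^ 2 - 2 * (α l * ⟪x l - z, g l⟫)
        + ‖g l‖ ^ 2 * α l ^ 2 := by
      have h2 : u - z = (x l - z) - α l • g l := by rw [hu]; abel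
      rw [h2, norm_sub_sq_real, real_inner_smul_right, norm_smul]
      simp only [Real.norm_eq_abs]
      rw [mul_pow, sq_abs]
      ring
    have hsubz := hsub l z hz
    rw [hfz] at hsubz
    have hswap : ⟪g l, z - x l⟫ = - ⟪x l - z, g l⟫ := by
      rw [real_inner_comm, ← inner_neg_left]; congr 1; abel
    have hkey : - ⟪x l - z, g l⟫ ≤ fstar - f (x l) := by
      rw [← hswap]; linarith
    have hmul : 2 * α l * (- ⟪x l - z, g l⟫) ≤ 2 * α l * (fstar - f (x l)) := by
      apply mul_le_mul_of_nonneg_left hkey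
      have := hα l; linarith
    nlinarith
  -- summed inequality
  have sumineq : ∀ z ∈ Q, f z = fstar → ∀ m, i ≤ m →
      ∑ l ∈ Finset.Icc i m, 2 * α l * (f (x l) - fstar)
        ≤ ‖x i - z‖ ^ 2 - ‖x (m + 1) - z‖ ^ 2
          + ∑ l ∈ Finset.Icc i m, ‖g l‖ ^ 2 * α l ^ 2 := by
    intro z hz hfz m hm
    induction m, hm using Nat.le_induction with
    | base =>
      simp only [Finset.Icc_self, Finset.sum_singleton]
      have := step i z hz hfz
      linarith
    | succ m hm ih =>
      rw [Finset.sum_Icc_succ_top (by omega : i ≤ m + 1),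
        Finset.sum_Icc_succ_top (by omega : i ≤ m + 1)]
      have := step (m + 1) z hz hfz
      linarith
  -- fb ≤ f (x l) for l ≤ k
  have hfble : ∀ l, l ≤ k → fb ≤ f (x l) := by
    intro l hl
    exact Finset.inf'_le _ (Finset.mem_range.mpr (by omega))
  -- key bound for any optimum z
  have key : ∀ z ∈ Opt, 2 * A * (fb - fstar) ≤ ‖x i - z‖ ^ 2 + S := by
    intro z hzOpt
    obtain ⟨hz, hfz⟩ := hzOpt
    have h1 := sumineq z hz hfz k hik
    have h2 : ∑ l ∈ Finset.Icc i k, 2 * α l * (fb - fstar)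
        ≤ ∑ l ∈ Finset.Icc i k, 2 * α l * (f (x l) - fstar) := by
      apply Finset.sum_le_sum
      intro l hl
      have hl' := Finset.mem_Icc.mp hl
      have := hfble l hl'.2
      have := hα l
      nlinarith
    have h3 : ∑ l ∈ Finset.Icc i k, 2 * α l * (fb - fstar) = 2 * A * (fb - fstar) := by
      rw [← Finset.sum_mul, Finset.mul_sum]
    nlinarith [sq_nonneg ‖x (k + 1) - z‖]
  -- Opt is nonempty
  have hOptne : Opt.Nonempty := by
    obtain ⟨z, hz, hfz⟩ := hattain
    exact ⟨z, hz, hfz⟩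
  -- pass to the infimum
  have hinf : 2 * A * (fb - fstar) ≤ Metric.infDist (x i) Opt ^ 2 + S := by
    set c := 2 * A * (fb - fstar) - S with hc
    have hgoal : c ≤ Metric.infDist (x i) Opt ^ 2 := by
      by_cases hc0 : c ≤ 0
      · exact hc0.trans (sq_nonneg _)
      · push_neg at hc0
        have hsqrt : Real.sqrt c ≤ Metric.infDist (x i) Opt := by
          by_contra hlt
          push_neg at hlt
          obtain ⟨y, hy, hdy⟩ := (Metric.infDist_lt_iff hOptne).mp hlt
          have h1 := key y hy
          have h2 : c ≤ dist (x i) y ^ 2 := by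
            rw [dist_eq_norm]; linarith
          have h3 : Real.sqrt c ≤ dist (x i) y := by
            calc Real.sqrt c ≤ Real.sqrt (dist (x i) y ^ 2) := Real.sqrt_le_sqrt h2
              _ = dist (x i) y := Real.sqrt_sq dist_nonneg
          linarith
        calc c = Real.sqrt c ^ 2 := (Real.sq_sqrt hc0.le).symm
          _ ≤ Metric.infDist (x i) Opt ^ 2 := by
            apply pow_le_pow_left₀ (Real.sqrt_nonneg _) hsqrt
    linarith
  have hA2 : 0 < 2 * A := by linarith
  constructor
  · have h4 : (fb - fstar) * (2 * A) ≤ Metric.infDist (x i) Opt ^ 2 + S := by linarith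
    have h5 := (le_div_iff₀ hA2).mpr h4
    linarith
  · intro M hM
    have hSle : S ≤ M ^ 2 * ∑ l ∈ Finset.Icc i k, α l ^ 2 := by
      rw [hS, Finset.mul_sum]
      apply Finset.sum_le_sum
      intro l hl
      have h1 := hM l
      have h2 := norm_nonneg (g l)
      have h3 : ‖g l‖ ^ 2 ≤ M ^ 2 := by nlinarith
      exact mul_le_mul_of_nonneg_right h3 (sq_nonneg _)
    have h4 : (fb - fstar) * (2 * A) ≤ Metric.infDist (x i) Opt ^ 2
        + M ^ 2 * ∑ l ∈ Finset.Icc i k, α l ^ 2 := by linarith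
    have h5 := (le_div_iff₀ hA2).mpr h4
    linarith
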